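/- The elements e_γ = (∏_{a ∉ γ, increasing}(1 - a)) · (∏_{a ∈ γ, decreasing} a), indexed by subsets γ of A, are pairwise orthogonal idempotents in ℤStyl(A): e_γ² = e_γ and e_γ e_δ = 0 for γ ≠ δ. -/

import Mathlib

noncomputable section

open FreeMonoid

/-- The defining relations of the stylic congruence: the Knuth (plactic)
relations together with the idempotent relations `a² ≡ a`. -/
inductive StylicRel (A : Type*) [LinearOrder A] : FreeMonoid A → FreeMonoid A → Prop
  | knuth1 {a b c : A} : a < b → b < c →
      StylicRel A (ofList [b, a, c]) (ofList [b, c, a])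
  | knuth2 {a b c : A} : a < b → b < c →
      StylicRel A (ofList [a, c, b]) (ofList [c, a, b])
  | knuth3 {a b : A} : a < b →
      StylicRel A (ofList [b, a, b]) (ofList [b, b, a])
  | knuth4 {a b : A} : a < b →
      StylicRel A (ofList [a, b, a]) (ofList [b, a, a])
  | idem (a : A) : StylicRel A (ofList [a, a]) (ofList [a])

/-- The stylic congruence on the free monoid `A*`. -/
def stylCon (A : Type*) [LinearOrder A] : Con (FreeMonoid A) := conGen (StylicRel A)

/-- The stylic monoid `Styl(A)`. -/
abbrev Styl (A : Type*) [LinearOrder A] := (stylCon A).Quotient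

/-- The image of a letter `a` in the stylic algebra `ℤStyl(A)`. -/
def styGen {A : Type*} [LinearOrder A] (a : A) : MonoidAlgebra ℤ (Styl A) :=
  MonoidAlgebra.of ℤ (Styl A) ((stylCon A).mk' (FreeMonoid.of a))

/-- The idempotent `e_γ = (∏_{a∉γ}^{↗} (1-a)) · (∏_{a∈γ}^{↘} a)` of `ℤStyl(A)`
associated with a column (subset) `γ ⊆ A`. -/
def eIdem {A : Type*} [LinearOrder A] [Fintype A] (γ : Finset A) :
    MonoidAlgebra ℤ (Styl A) :=
  (((γᶜ).sort (· ≤ ·)).map (fun a => 1 - styGen a)).prod *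
    ((γ.sort (· ≤ ·)).reverse.map styGen).prod

namespace StylProof

variable {A : Type*} [LinearOrder A]

/-- The image of a word in the stylic monoid. -/
def mkw (l : List A) : Styl A := (stylCon A).mk' (FreeMonoid.ofList l)

lemma mkw_append (l₁ l₂ : List A) : mkw (l₁ ++ l₂) = mkw l₁ * mkw l₂ := by
  unfold mkw; rw [FreeMonoid.ofList_append, map_mul]

lemma mkw_nil : mkw ([] : List A) = 1 := map_one _

lemma mkw_rel {l₁ l₂ : List A} (h : StylicRel A (ofList l₁) (ofList l₂)) :
    mkw l₁ = mkw l₂ :=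
  (Con.eq _).mpr (ConGen.Rel.of _ _ h)

lemma rel_k1 {a b c : A} (h1 : a < b) (h2 : b < c) : mkw [b, a, c] = mkw [b, c, a] :=
  mkw_rel (StylicRel.knuth1 h1 h2)

lemma rel_k2 {a b c : A} (h1 : a < b) (h2 : b < c) : mkw [a, c, b] = mkw [c, a, b] :=
  mkw_rel (StylicRel.knuth2 h1 h2)

lemma rel_k4 {a b : A} (h : a < b) : mkw [a, b, a] = mkw [b, a, a] :=
  mkw_rel (StylicRel.knuth4 h)

lemma rel_idem (a : A) : mkw [a, a] = mkw [a] :=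
  mkw_rel (StylicRel.idem a)

lemma ctx3 (u v : List A) {x y z x' y' z' : A}
    (h : mkw [x, y, z] = mkw [x', y', z']) :
    mkw (u ++ x :: y :: z :: v) = mkw (u ++ x' :: y' :: z' :: v) := by
  rw [show u ++ x :: y :: z :: v = (u ++ [x, y, z]) ++ v by simp,
      show u ++ x' :: y' :: z' :: v = (u ++ [x', y', z']) ++ v by simp,
      mkw_append, mkw_append, mkw_append, mkw_append, h]

lemma ctx2 (u v : List A) (x : A) :
    mkw (u ++ x :: x :: v) = mkw (u ++ x :: v) := by
  rw [show u ++ x :: x :: v = (u ++ [x, x]) ++ v by simp,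
      show u ++ x :: v = (u ++ [x]) ++ v by simp,
      mkw_append, mkw_append, mkw_append, mkw_append, rel_idem]

/-- Base case of the pivot lemma: empty ascending prefix. -/
lemma pivotNil (m : A) (n : ℕ)
    (IH : ∀ z : List A, z.length ≤ n → (∀ c ∈ z, m ≤ c) → m ∈ z →
      mkw (m :: z) = mkw z)
    (ul d : A) (t' : List A)
    (hlen : t'.length + 2 ≤ n + 1)
    (hmul : m < ul)
    (ht : ∀ c ∈ d :: t', m ≤ c)
    (hmem : m ∈ d :: t') (hd : d < ul) :
    mkw (m :: ul :: d :: t') = mkw (ul :: d :: t') := by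
  rcases eq_or_lt_of_le (ht d List.mem_cons_self) with hmd | hmd
  · -- m = d
    subst hmd
    have h1 := ctx3 ([] : List A) t' (rel_k4 hmul)
    have h2 := ctx2 [ul] t' m
    simpa using h1.trans h2
  · -- m < d
    have h1 := ctx3 ([] : List A) t' (rel_k2 hmd hd)
    simp only [List.nil_append] at h1
    rw [h1, show ul :: m :: d :: t' = [ul] ++ (m :: d :: t') by simp, mkw_append,
        IH (d :: t') (by simp only [List.length_cons]; omega) ht hmem,
        ← mkw_append]
    simp

/-- The pivot lemma: the first letter `m` (minimal) can be absorbed when the word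
consists of a strictly increasing run `u₀ ++ [ul]`, then a descent `d < ul`,
with `m` occurring later. -/
lemma pivot (m : A) (n : ℕ)
    (IH : ∀ z : List A, z.length ≤ n → (∀ c ∈ z, m ≤ c) → m ∈ z →
      mkw (m :: z) = mkw z) :
    ∀ (k : ℕ) (u₀ : List A) (ul d : A) (t' : List A),
      u₀.length ≤ k →
      u₀.length + t'.length + 2 ≤ n + 1 →
      u₀.Pairwise (· < ·) → (∀ c ∈ u₀, c < ul) →
      (∀ c ∈ u₀, m < c) → m < ul →
      (∀ c ∈ d :: t', m ≤ c) → m ∈ (d :: t') → d < ul →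
      mkw (m :: (u₀ ++ ul :: d :: t')) = mkw (u₀ ++ ul :: d :: t') := by
  intro k
  induction k with
  | zero =>
    intro u₀ ul d t' hk hlen _ _ _ hmul ht hmem hd
    obtain rfl : u₀ = [] := List.eq_nil_of_length_eq_zero (Nat.le_zero.mp hk)
    simpa using pivotNil m n IH ul d t' (by simpa using hlen) hmul ht hmem hd
  | succ k ihk =>
    intro u₀ ul d t' hk hlen hu₀ hlt hmu hmul ht hmem hd
    rcases List.eq_nil_or_concat u₀ with rfl | ⟨u₁, v, hcat⟩
    · simpa using pivotNil m n IH ul d t' (by simpa using hlen) hmul ht hmem hd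
    · -- u₀ = u₁ ++ [v]
      rw [List.concat_eq_append] at hcat
      subst hcat
      have hsplit := List.pairwise_append.mp hu₀
      have hu₁ : u₁.Pairwise (· < ·) := hsplit.1
      have hcv : ∀ c ∈ u₁, c < v := fun c hc =>
        hsplit.2.2 c hc v (List.mem_singleton_self v)
      have hvul : v < ul := hlt v (by simp)
      have hmv : m < v := hmu v (by simp)
      have hlen' : u₁.length + 1 = (u₁ ++ [v]).length := by simp
      have hk1 : u₁.length ≤ k := by
        have := hk; simp only [List.length_append, List.length_singleton] at this; omega
      rcases lt_trichotomy d v with hdv | hdveq | hvd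
      · -- d < v : knuth1 pivot
        have e1 : mkw ((m :: u₁) ++ v :: ul :: d :: t')
            = mkw ((m :: u₁) ++ v :: d :: ul :: t') :=
          ctx3 (m :: u₁) t' (rel_k1 hdv hvul).symm
        have e2 : mkw (u₁ ++ v :: ul :: d :: t')
            = mkw (u₁ ++ v :: d :: ul :: t') :=
          ctx3 u₁ t' (rel_k1 hdv hvul).symm
        have hrec := ihk u₁ v d (ul :: t') hk1
          (by simp only [List.length_append, List.length_singleton, List.length_nil,
                List.length_cons] at hlen ⊢; omega)
          hu₁ hcv (fun c hc => hmu c (by simp [hc])) hmv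
          (by
            intro c hc
            rcases List.mem_cons.mp hc with rfl | hc
            · exact ht c (List.mem_cons_self)
            · rcases List.mem_cons.mp hc with rfl | hc
              · exact le_of_lt hmul
              · exact ht c (List.mem_cons_of_mem _ hc))
          (by
            rcases List.mem_cons.mp hmem with rfl | hm'
            · exact List.mem_cons_self
            · exact List.mem_cons_of_mem _ (List.mem_cons_of_mem _ hm'))
          hdv
        have goal1 : mkw (m :: (u₁ ++ v :: d :: ul :: t'))
            = mkw (u₁ ++ v :: d :: ul :: t') := hrec
        calc mkw (m :: ((u₁ ++ [v]) ++ ul :: d :: t'))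
            = mkw ((m :: u₁) ++ v :: ul :: d :: t') := by simp
          _ = mkw ((m :: u₁) ++ v :: d :: ul :: t') := e1
          _ = mkw (u₁ ++ v :: d :: ul :: t') := by
                simpa using goal1
          _ = mkw (u₁ ++ v :: ul :: d :: t') := e2.symm
          _ = mkw ((u₁ ++ [v]) ++ ul :: d :: t') := by simp
      · -- d = d : knuth4 + idem, word shrinks
        subst hdveq
        have e1 : mkw ((m :: u₁) ++ d :: ul :: d :: t')
            = mkw ((m :: u₁) ++ ul :: d :: d :: t') :=
          ctx3 (m :: u₁) t' (rel_k4 hvul)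
        have e2 : mkw (u₁ ++ d :: ul :: d :: t')
            = mkw (u₁ ++ ul :: d :: d :: t') :=
          ctx3 u₁ t' (rel_k4 hvul)
        have f1 : mkw ((m :: u₁) ++ ul :: d :: d :: t')
            = mkw ((m :: u₁) ++ ul :: d :: t') := by
          simpa using ctx2 ((m :: u₁) ++ [ul]) t' d
        have f2 : mkw (u₁ ++ ul :: d :: d :: t')
            = mkw (u₁ ++ ul :: d :: t') := by
          simpa using ctx2 (u₁ ++ [ul]) t' d
        have hmem' : m ∈ t' := by
          rcases List.mem_cons.mp hmem with rfl | hm'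
          · exact absurd hmv (lt_irrefl m)
          · exact hm'
        have hrec := IH (u₁ ++ ul :: d :: t')
          (by simp only [List.length_append, List.length_singleton, List.length_nil,
                List.length_cons] at hlen ⊢; omega)
          (by
            intro c hc
            rcases List.mem_append.mp hc with hc | hc
            · exact le_of_lt (hmu c (by simp [hc]))
            · rcases List.mem_cons.mp hc with rfl | hc
              · exact le_of_lt hmul
              · rcases List.mem_cons.mp hc with rfl | hc
                · exact le_of_lt hmv
                · exact ht c (List.mem_cons_of_mem _ hc))
          (by
            refine List.mem_append.mpr (Or.inr ?_)
            exact List.mem_cons_of_mem _ (List.mem_cons_of_mem _ hmem'))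
        calc mkw (m :: ((u₁ ++ [d]) ++ ul :: d :: t'))
            = mkw ((m :: u₁) ++ d :: ul :: d :: t') := by simp
          _ = mkw ((m :: u₁) ++ ul :: d :: d :: t') := e1
          _ = mkw ((m :: u₁) ++ ul :: d :: t') := f1
          _ = mkw (u₁ ++ ul :: d :: t') := by
                simpa using hrec
          _ = mkw (u₁ ++ ul :: d :: d :: t') := f2.symm
          _ = mkw (u₁ ++ d :: ul :: d :: t') := e2.symm
          _ = mkw ((u₁ ++ [d]) ++ ul :: d :: t') := by simp
      · -- v < d : knuth2 pivot
        have e1 : mkw ((m :: u₁) ++ v :: ul :: d :: t')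
            = mkw ((m :: u₁) ++ ul :: v :: d :: t') :=
          ctx3 (m :: u₁) t' (rel_k2 hvd hd)
        have e2 : mkw (u₁ ++ v :: ul :: d :: t')
            = mkw (u₁ ++ ul :: v :: d :: t') :=
          ctx3 u₁ t' (rel_k2 hvd hd)
        have hmem' : m ∈ t' := by
          rcases List.mem_cons.mp hmem with rfl | hm'
          · exact absurd (lt_trans hmv hvd) (lt_irrefl m)
          · exact hm'
        have hrec := ihk u₁ ul v (d :: t') hk1
          (by simp only [List.length_append, List.length_singleton, List.length_nil,
                List.length_cons] at hlen ⊢; omega)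
          hu₁ (fun c hc => hlt c (by simp [hc]))
          (fun c hc => hmu c (by simp [hc])) hmul
          (by
            intro c hc
            rcases List.mem_cons.mp hc with rfl | hc
            · exact le_of_lt hmv
            · exact ht c hc)
          (List.mem_cons_of_mem _ (List.mem_cons_of_mem _ hmem'))
          hvul
        calc mkw (m :: ((u₁ ++ [v]) ++ ul :: d :: t'))
            = mkw ((m :: u₁) ++ v :: ul :: d :: t') := by simp
          _ = mkw ((m :: u₁) ++ ul :: v :: d :: t') := e1
          _ = mkw (u₁ ++ ul :: v :: d :: t') := by
                simpa using hrec
          _ = mkw (u₁ ++ v :: ul :: d :: t') := e2.symm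
          _ = mkw ((u₁ ++ [v]) ++ ul :: d :: t') := by simp

/-- Scan lemma: absorb `m` at the front of a word starting with a strictly
increasing run followed by the rest `t` containing `m`. -/
lemma scan (m : A) (n : ℕ)
    (IH : ∀ z : List A, z.length ≤ n → (∀ c ∈ z, m ≤ c) → m ∈ z →
      mkw (m :: z) = mkw z) :
    ∀ (j : ℕ) (t u₀ : List A) (ul : A),
      t.length ≤ j →
      u₀.length + 1 + t.length ≤ n + 1 →
      u₀.Pairwise (· < ·) → (∀ c ∈ u₀, c < ul) →
      (∀ c ∈ u₀, m < c) → m < ul →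
      (∀ c ∈ t, m ≤ c) → m ∈ t →
      mkw (m :: (u₀ ++ ul :: t)) = mkw (u₀ ++ ul :: t) := by
  intro j
  induction j with
  | zero =>
    intro t u₀ ul hj _ _ _ _ _ _ hmem
    obtain rfl : t = [] := List.eq_nil_of_length_eq_zero (Nat.le_zero.mp hj)
    exact absurd hmem List.not_mem_nil
  | succ j ihj =>
    intro t u₀ ul hj hlen hu₀ hlt hmu hmul ht hmem
    cases t with
    | nil => exact absurd hmem List.not_mem_nil
    | cons d t' =>
      rcases lt_trichotomy d ul with hd | hdeq | hud
      · exact pivot m n IH u₀.length u₀ ul d t' le_rfl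
          (by simp only [List.length_cons] at hlen; omega)
          hu₀ hlt hmu hmul ht hmem hd
      · -- d = d : idem
        subst hdeq
        have hmem' : m ∈ t' := by
          rcases List.mem_cons.mp hmem with rfl | hm'
          · exact absurd hmul (lt_irrefl m)
          · exact hm'
        have e1 : mkw ((m :: u₀) ++ d :: d :: t')
            = mkw ((m :: u₀) ++ d :: t') := by
          simpa using ctx2 (m :: u₀) t' d
        have e2 : mkw (u₀ ++ d :: d :: t')
            = mkw (u₀ ++ d :: t') := by
          simpa using ctx2 u₀ t' d
        have hrec := IH (u₀ ++ d :: t')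
          (by simp only [List.length_append, List.length_cons] at hlen ⊢; omega)
          (by
            intro c hc
            rcases List.mem_append.mp hc with hc | hc
            · exact le_of_lt (hmu c hc)
            · rcases List.mem_cons.mp hc with rfl | hc
              · exact le_of_lt hmul
              · exact ht c (List.mem_cons_of_mem _ hc))
          (List.mem_append.mpr (Or.inr (List.mem_cons_of_mem _ hmem')))
        calc mkw (m :: (u₀ ++ d :: d :: t'))
            = mkw ((m :: u₀) ++ d :: d :: t') := by simp
          _ = mkw ((m :: u₀) ++ d :: t') := e1
          _ = mkw (u₀ ++ d :: t') := by simpa using hrec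
          _ = mkw (u₀ ++ d :: d :: t') := e2.symm
      · -- ul < d : extend the run
        have hmem' : m ∈ t' := by
          rcases List.mem_cons.mp hmem with rfl | hm'
          · exact absurd (lt_trans hmul hud) (lt_irrefl m)
          · exact hm'
        have hrec := ihj t' (u₀ ++ [ul]) d
          (by simp only [List.length_cons] at hj; omega)
          (by simp only [List.length_append, List.length_singleton, List.length_nil,
                List.length_cons] at hlen ⊢; omega)
          (by
            refine List.pairwise_append.mpr ⟨hu₀, List.pairwise_singleton _ _, ?_⟩
            intro a ha b hb
            rw [List.mem_singleton.mp hb]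
            exact hlt a ha)
          (by
            intro c hc
            rcases List.mem_append.mp hc with hc | hc
            · exact lt_trans (hlt c hc) hud
            · rw [List.mem_singleton.mp hc]; exact hud)
          (by
            intro c hc
            rcases List.mem_append.mp hc with hc | hc
            · exact hmu c hc
            · rw [List.mem_singleton.mp hc]; exact hmul)
          (lt_trans hmul hud)
          (fun c hc => ht c (List.mem_cons_of_mem _ hc))
          hmem'
        calc mkw (m :: (u₀ ++ ul :: d :: t'))
            = mkw (m :: ((u₀ ++ [ul]) ++ d :: t')) := by simp
          _ = mkw ((u₀ ++ [ul]) ++ d :: t') := hrec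
          _ = mkw (u₀ ++ ul :: d :: t') := by simp

/-- The key absorption lemma: if `m` is a lower bound for the letters of `z`
and occurs in `z`, then `m · z = z` in the stylic monoid. -/
lemma keyLemma (m : A) :
    ∀ (n : ℕ) (z : List A), z.length ≤ n → (∀ c ∈ z, m ≤ c) → m ∈ z →
      mkw (m :: z) = mkw z := by
  intro n
  induction n with
  | zero =>
    intro z hz _ hmem
    obtain rfl : z = [] := List.eq_nil_of_length_eq_zero (Nat.le_zero.mp hz)
    exact absurd hmem List.not_mem_nil
  | succ n ihn =>
    intro z hz hlet hmem
    cases z with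
    | nil => exact absurd hmem List.not_mem_nil
    | cons b t =>
      rcases eq_or_lt_of_le (hlet b List.mem_cons_self) with hmb | hmb
      · subst hmb
        simpa using ctx2 ([] : List A) t m
      · have hmt : m ∈ t := by
          rcases List.mem_cons.mp hmem with rfl | hm'
          · exact absurd hmb (lt_irrefl m)
          · exact hm'
        have := scan m n ihn t.length t [] b le_rfl
          (by simp only [List.length_nil, List.length_cons] at hz ⊢; omega) (List.Pairwise.nil)
          (by intro c hc; exact absurd hc List.not_mem_nil)
          (by intro c hc; exact absurd hc List.not_mem_nil)
          hmb (fun c hc => hlet c (List.mem_cons_of_mem _ hc)) hmt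
        simpa using this

/-- `m · (w · m) = w · m` whenever `m` is a lower bound for `w`. -/
lemma absorbLow (m : A) (w : List A) (hw : ∀ c ∈ w, m ≤ c) :
    mkw (m :: (w ++ [m])) = mkw (w ++ [m]) := by
  refine keyLemma m (w ++ [m]).length (w ++ [m]) le_rfl ?_ ?_
  · intro c hc
    rcases List.mem_append.mp hc with hc | hc
    · exact hw c hc
    · rw [List.mem_singleton.mp hc]
  · exact List.mem_append.mpr (Or.inr (List.mem_singleton_self m))

/-! ### Algebra level -/

/-- The image of a word in the stylic algebra. -/
def TT (l : List A) : MonoidAlgebra ℤ (Styl A) :=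
  MonoidAlgebra.of ℤ (Styl A) (mkw l)

lemma TT_mul (l₁ l₂ : List A) : TT l₁ * TT l₂ = TT (l₁ ++ l₂) := by
  unfold TT; rw [mkw_append, map_mul]

lemma TT_nil : TT ([] : List A) = 1 := by
  unfold TT; rw [mkw_nil, map_one]

lemma styGen_eq (a : A) : styGen a = TT [a] := rfl

/-- The span of (monomials of) words all of whose letters are `≥ m`. -/
def W (m : A) : Submodule ℤ (MonoidAlgebra ℤ (Styl A)) :=
  Submodule.span ℤ {x | ∃ l : List A, (∀ c ∈ l, m ≤ c) ∧ x = TT l}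

lemma W_one (m : A) : (1 : MonoidAlgebra ℤ (Styl A)) ∈ W m :=
  Submodule.subset_span ⟨[], by simp, TT_nil.symm⟩

lemma W_gen {m a : A} (h : m ≤ a) : styGen a ∈ W m :=
  Submodule.subset_span ⟨[a], by simpa using h, styGen_eq a⟩

lemma W_mul {m : A} {X Y : MonoidAlgebra ℤ (Styl A)}
    (hX : X ∈ W m) (hY : Y ∈ W m) : X * Y ∈ W m := by
  refine Submodule.span_induction₂
    (p := fun x y _ _ => x * y ∈ W m) ?_ ?_ ?_ ?_ ?_ ?_ ?_ hX hY
  · rintro x y ⟨l₁, h₁, rfl⟩ ⟨l₂, h₂, rfl⟩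
    refine Submodule.subset_span ⟨l₁ ++ l₂, ?_, TT_mul l₁ l₂⟩
    intro c hc
    rcases List.mem_append.mp hc with hc | hc
    · exact h₁ c hc
    · exact h₂ c hc
  · intro y _; rw [zero_mul]; exact Submodule.zero_mem _
  · intro x _; rw [mul_zero]; exact Submodule.zero_mem _
  · intro x y z _ _ _ h1 h2; rw [add_mul]; exact Submodule.add_mem _ h1 h2
  · intro x y z _ _ _ h1 h2; rw [mul_add]; exact Submodule.add_mem _ h1 h2
  · intro r x y _ _ h; rw [smul_mul_assoc]; exact Submodule.smul_mem _ _ h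
  · intro r x y _ _ h; rw [mul_smul_comm]; exact Submodule.smul_mem _ _ h

lemma W_key {m : A} {X : MonoidAlgebra ℤ (Styl A)} (hX : X ∈ W m) :
    TT [m] * X * TT [m] = X * TT [m] := by
  refine Submodule.span_induction
    (p := fun X _ => TT [m] * X * TT [m] = X * TT [m]) ?_ ?_ ?_ ?_ hX
  · rintro x ⟨l, hl, rfl⟩
    rw [TT_mul, TT_mul, TT_mul]
    have h1 : ([m] ++ l) ++ [m] = m :: (l ++ [m]) := by simp
    rw [h1]
    unfold TT
    rw [absorbLow m l hl]
  · simp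
  · intro x y _ _ h1 h2
    rw [mul_add, add_mul, add_mul, h1, h2]
  · intro r x _ h
    simp only [smul_mul_assoc, mul_smul_comm, h]

lemma gm_idem (m : A) : TT [m] * TT [m] = TT ([m] : List A) := by
  rw [TT_mul]
  unfold TT
  rw [show ([m] ++ [m] : List A) = [m, m] from rfl, rel_idem m]

/-- The partial idempotent relative to a sub-alphabet `s`. -/
def Eelt (s γ : Finset A) : MonoidAlgebra ℤ (Styl A) :=
  (((s \ γ).sort (· ≤ ·)).map (fun a => 1 - styGen a)).prod *
    ((γ.sort (· ≤ ·)).reverse.map styGen).prod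

lemma listProd_mem_W {m : A} (l : List (MonoidAlgebra ℤ (Styl A)))
    (h : ∀ x ∈ l, x ∈ W m) : l.prod ∈ W m := by
  induction l with
  | nil => simpa using W_one m
  | cons a t ih =>
    rw [List.prod_cons]
    exact W_mul (h a List.mem_cons_self) (ih fun x hx => h x (List.mem_cons_of_mem _ hx))

lemma Eelt_mem_W {m : A} {s γ : Finset A} (hs : ∀ c ∈ s, m ≤ c) (hγ : γ ⊆ s) :
    Eelt s γ ∈ W m := by
  unfold Eelt
  refine W_mul (listProd_mem_W _ ?_) (listProd_mem_W _ ?_)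
  · intro x hx
    rcases List.mem_map.mp hx with ⟨a, ha, rfl⟩
    have has : a ∈ s := (Finset.mem_sdiff.mp (Finset.mem_sort (α := A) (· ≤ ·) |>.mp ha)).1
    exact Submodule.sub_mem _ (W_one m) (W_gen (hs a has))
  · intro x hx
    rcases List.mem_map.mp hx with ⟨a, ha, rfl⟩
    have ha' : a ∈ γ := Finset.mem_sort (α := A) (· ≤ ·) |>.mp (List.mem_reverse.mp ha)
    exact W_gen (hs a (hγ ha'))

lemma sort_min_cons {γ : Finset A} {m : A} (hm : m ∈ γ) (hmin : ∀ x ∈ γ, m ≤ x) :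
    γ.sort (· ≤ ·) = m :: (γ.erase m).sort (· ≤ ·) := by
  refine List.Perm.eq_of_pairwise' (Finset.pairwise_sort _ _) ?_ ?_
  rotate_left
  · refine Multiset.coe_eq_coe.mp ?_
    rw [Finset.sort_eq]
    have : ((m :: (γ.erase m).sort (· ≤ ·) : List A) : Multiset A)
        = m ::ₘ ((γ.erase m).sort (· ≤ ·) : List A) := rfl
    rw [this, Finset.sort_eq, Finset.erase_val, Multiset.cons_erase hm]
  · refine List.pairwise_cons.mpr ⟨?_, Finset.pairwise_sort _ _⟩
    intro b hb
    exact hmin b (Finset.mem_of_mem_erase (Finset.mem_sort (α := A) (· ≤ ·) |>.mp hb))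

lemma sdiff_erase_eq {s γ : Finset A} {m : A} (hm : m ∈ γ) :
    s \ γ = (s.erase m) \ (γ.erase m) := by
  ext x
  simp only [Finset.mem_sdiff, Finset.mem_erase]
  constructor
  · rintro ⟨hxs, hxγ⟩
    exact ⟨⟨fun h => hxγ (h ▸ hm), hxs⟩, fun h => hxγ h.2⟩
  · rintro ⟨⟨hxm, hxs⟩, h⟩
    exact ⟨hxs, fun hxγ => h ⟨hxm, hxγ⟩⟩

lemma erase_sdiff_eq {s γ : Finset A} {m : A} (hm : m ∉ γ) :
    (s \ γ).erase m = (s.erase m) \ γ := by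
  ext x
  simp only [Finset.mem_erase, Finset.mem_sdiff]
  tauto

lemma Eelt_decomp_mem {s γ : Finset A} {m : A} (hγs : γ ⊆ s) (hm : m ∈ γ)
    (hmin : ∀ x ∈ s, m ≤ x) :
    Eelt s γ = Eelt (s.erase m) (γ.erase m) * styGen m := by
  unfold Eelt
  rw [sdiff_erase_eq hm, sort_min_cons hm (fun x hx => hmin x (hγs hx))]
  rw [List.reverse_cons, List.map_append, List.prod_append]
  simp [mul_assoc]

lemma Eelt_decomp_not_mem {s γ : Finset A} {m : A} (hm : m ∉ γ) (hms : m ∈ s)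
    (hmin : ∀ x ∈ s, m ≤ x) :
    Eelt s γ = (1 - styGen m) * Eelt (s.erase m) γ := by
  unfold Eelt
  have h1 : (s \ γ).sort (· ≤ ·) = m :: ((s.erase m) \ γ).sort (· ≤ ·) := by
    rw [← erase_sdiff_eq hm]
    exact sort_min_cons (Finset.mem_sdiff.mpr ⟨hms, hm⟩)
      (fun x hx => hmin x (Finset.mem_sdiff.mp hx).1)
  rw [h1, List.map_cons, List.prod_cons, mul_assoc]

lemma aux_kill {m : A} {X : MonoidAlgebra ℤ (Styl A)} (hX : X ∈ W m) :
    ((1 - styGen m) * X) * styGen m = 0 := by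
  rw [sub_mul, one_mul, sub_mul, mul_assoc, styGen_eq, ← mul_assoc, W_key hX, sub_self]

theorem Emain (s : Finset A) : ∀ γ δ : Finset A, γ ⊆ s → δ ⊆ s →
    Eelt s γ * Eelt s δ = if γ = δ then Eelt s γ else 0 := by
  induction s using Finset.strongInductionOn with
  | _ s IH =>
  rcases s.eq_empty_or_nonempty with rfl | hs
  · intro γ δ hγ hδ
    rw [Finset.subset_empty.mp hγ, Finset.subset_empty.mp hδ, if_pos rfl]
    unfold Eelt
    simp
  · set m := s.min' hs with hm_def
    have hms : m ∈ s := s.min'_mem hs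
    have hmin : ∀ x ∈ s, m ≤ x := fun x hx => s.min'_le x hx
    have hmin' : ∀ c ∈ s.erase m, m ≤ c := fun c hc => hmin c (Finset.mem_of_mem_erase hc)
    have IH' := IH (s.erase m) (Finset.erase_ssubset hms)
    have hgm : styGen m * styGen m = styGen m := by
      rw [styGen_eq]; exact gm_idem m
    have hkey : ∀ X ∈ W m, styGen m * X * styGen m = X * styGen m := by
      intro X hX; rw [styGen_eq]; exact W_key hX
    intro γ δ hγ hδ
    by_cases h1 : m ∈ γ <;> by_cases h2 : m ∈ δ
    · -- m ∈ γ, m ∈ δ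
      rw [Eelt_decomp_mem hγ h1 hmin, Eelt_decomp_mem hδ h2 hmin]
      set X := Eelt (s.erase m) (γ.erase m) with hXdef
      set Y := Eelt (s.erase m) (δ.erase m) with hYdef
      have hY : Y ∈ W m := Eelt_mem_W hmin' (Finset.erase_subset_erase m hδ)
      have hiff : (γ.erase m = δ.erase m) ↔ γ = δ := by
        constructor
        · intro h
          rw [← Finset.insert_erase h1, ← Finset.insert_erase h2, h]
        · intro h; rw [h]
      calc X * styGen m * (Y * styGen m)
          = X * (styGen m * Y * styGen m) := by
            rw [mul_assoc X (styGen m) (Y * styGen m), ← mul_assoc (styGen m) Y (styGen m)]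
        _ = X * (Y * styGen m) := by rw [hkey Y hY]
        _ = (X * Y) * styGen m := by rw [mul_assoc]
        _ = (if γ.erase m = δ.erase m then X else 0) * styGen m := by
            rw [IH' _ _ (Finset.erase_subset_erase m hγ) (Finset.erase_subset_erase m hδ)]
        _ = if γ = δ then X * styGen m else 0 := by
            by_cases h : γ = δ
            · rw [if_pos (hiff.mpr h), if_pos h]
            · rw [if_neg (fun hh => h (hiff.mp hh)), if_neg h, zero_mul]
    · -- m ∈ γ, m ∉ δ
      have hne : γ ≠ δ := fun h => h2 (h ▸ h1)
      rw [if_neg hne, Eelt_decomp_mem hγ h1 hmin, Eelt_decomp_not_mem h2 hms hmin]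
      rw [mul_assoc (Eelt (s.erase m) (γ.erase m)) (styGen m) _,
          ← mul_assoc (styGen m) (1 - styGen m) _]
      have : styGen m * (1 - styGen m) = 0 := by
        rw [mul_sub, mul_one, hgm, sub_self]
      rw [this, zero_mul, mul_zero]
    · -- m ∉ γ, m ∈ δ
      have hne : γ ≠ δ := fun h => h1 (h ▸ h2)
      rw [if_neg hne, Eelt_decomp_not_mem h1 hms hmin, Eelt_decomp_mem hδ h2 hmin]
      set X := Eelt (s.erase m) γ with hXdef
      set Y := Eelt (s.erase m) (δ.erase m) with hYdef
      have hγ' : γ ⊆ s.erase m := Finset.subset_erase.mpr ⟨hγ, h1⟩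
      have hX : X ∈ W m := Eelt_mem_W hmin' hγ'
      calc (1 - styGen m) * X * (Y * styGen m)
          = (1 - styGen m) * ((X * Y) * styGen m) := by
            rw [mul_assoc, mul_assoc]
        _ = (1 - styGen m) * ((if γ = δ.erase m then X else 0) * styGen m) := by
            rw [IH' _ _ hγ' (Finset.erase_subset_erase m hδ)]
        _ = 0 := by
            by_cases h : γ = δ.erase m
            · rw [if_pos h, ← mul_assoc]
              exact aux_kill hX
            · rw [if_neg h, zero_mul, mul_zero]
    · -- m ∉ γ, m ∉ δ
      rw [Eelt_decomp_not_mem h1 hms hmin, Eelt_decomp_not_mem h2 hms hmin]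
      set X := Eelt (s.erase m) γ with hXdef
      set Y := Eelt (s.erase m) δ with hYdef
      have hγ' : γ ⊆ s.erase m := Finset.subset_erase.mpr ⟨hγ, h1⟩
      have hδ' : δ ⊆ s.erase m := Finset.subset_erase.mpr ⟨hδ, h2⟩
      have hX : X ∈ W m := Eelt_mem_W hmin' hγ'
      have expand : (1 - styGen m) * Y = Y - styGen m * Y := by
        rw [sub_mul, one_mul]
      calc (1 - styGen m) * X * ((1 - styGen m) * Y)
          = (1 - styGen m) * X * Y - ((1 - styGen m) * X * styGen m) * Y := by
            rw [expand, mul_sub, ← mul_assoc]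
        _ = (1 - styGen m) * X * Y := by
            rw [aux_kill hX, zero_mul, sub_zero]
        _ = (1 - styGen m) * (if γ = δ then X else 0) := by
            rw [mul_assoc, IH' _ _ hγ' hδ']
        _ = if γ = δ then (1 - styGen m) * X else 0 := by
            by_cases h : γ = δ
            · rw [if_pos h, if_pos h]
            · rw [if_neg h, if_neg h, mul_zero]

end StylProof

/-- Theorem `system`, part 1: the elements `e_γ`,
`γ ⊆ A`, are pairwise orthogonal idempotents of `ℤStyl(A)`. -/
theorem eIdem_orthogonal_idempotents {A : Type*} [LinearOrder A] [Fintype A]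
    (γ δ : Finset A) :
    eIdem γ * eIdem γ = eIdem γ ∧ (γ ≠ δ → eIdem γ * eIdem δ = 0) := by
  have h : ∀ σ : Finset A, eIdem σ = StylProof.Eelt Finset.univ σ := by
    intro σ
    unfold eIdem StylProof.Eelt
    rw [Finset.compl_eq_univ_sdiff]
  constructor
  · rw [h γ, StylProof.Emain Finset.univ γ γ (Finset.subset_univ γ) (Finset.subset_univ γ),
      if_pos rfl]
  · intro hne
    rw [h γ, h δ, StylProof.Emain Finset.univ γ δ (Finset.subset_univ γ) (Finset.subset_univ δ),
      if_neg hne]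

end
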